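/- Let R be a commutative ring, let T be a unit of R, let n ≥ 2, and let A be the n×n matrix over R with entries A_{i,i+1} = T for 1 ≤ i ≤ n−1, A_{n,1} = 1, A_{n,j} = 1−T for 2 ≤ j ≤ n, and all other entries 0. If e_n · A^{kn} = e_n for some natural number k (where e_i denotes the i-th standard basis row vector and vectors multiply matrices on the right), then e_j · A^{kn} = e_j for every j = 1, 2, …, n; equivalently A^{kn} is the identity matrix. -/

import Mathlib

/-- The torus-braid monodromy matrix `A(T)`: the `n × n` matrix (rows and
columns indexed by `Fin n`, i.e. `0,…,n−1` instead of `1,…,n`) with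
`A_{i,i+1} = T` for `i < n−1`, last row `(1, 1−T, …, 1−T)`, and all other
entries `0`. -/
def torusMatrix (R : Type*) [CommRing R] (n : ℕ) (T : R) :
    Matrix (Fin n) (Fin n) R :=
  Matrix.of fun i j =>
    if (i : ℕ) = n - 1 then (if (j : ℕ) = 0 then 1 else 1 - T)
    else if (j : ℕ) = (i : ℕ) + 1 then T else 0

lemma torusMatrix_det_isUnit {R : Type*} [CommRing R] (T : R) (hT : IsUnit T)
    (n : ℕ) (hn : 2 ≤ n) : IsUnit (torusMatrix R n T).det := by
  obtain ⟨m, rfl⟩ : ∃ m, n = m + 1 := ⟨n - 1, by omega⟩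
  rw [Matrix.det_succ_column_zero]
  have hsub : (torusMatrix R (m + 1) T).submatrix (Fin.last m).succAbove Fin.succ
      = Matrix.diagonal (fun _ : Fin m => T) := by
    ext i j
    simp only [Matrix.submatrix_apply, Fin.succAbove_last, torusMatrix, Matrix.of_apply,
      Fin.coe_castSucc, Fin.val_succ, Matrix.diagonal_apply]
    have hi : (i : ℕ) ≠ m + 1 - 1 := by omega
    rw [if_neg hi]
    by_cases hij : i = j
    · rw [if_pos (by rw [hij]), if_pos hij]
    · rw [if_neg (fun hc => hij (Fin.ext (by omega))), if_neg hij]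
  have hzero : ∀ i : Fin (m + 1), i ≠ Fin.last m → torusMatrix R (m+1) T i 0 = 0 := by
    intro i hi
    have : (i : ℕ) ≠ m := fun hc => hi (Fin.ext (by simpa using hc))
    simp [torusMatrix, this]
  rw [Finset.sum_eq_single (Fin.last m) (fun i _ hi => by rw [hzero i hi]; ring)
    (by simp)]
  have hlast : torusMatrix R (m+1) T (Fin.last m) 0 = 1 := by
    simp [torusMatrix]
  rw [hlast, hsub, Matrix.det_diagonal]
  simp only [Finset.prod_const, Finset.card_univ, Fintype.card_fin, mul_one]
  exact ((isUnit_one.neg.pow m).mul (hT.pow m))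

lemma torusMatrix_vecMul_cancel {R : Type*} [CommRing R] (T : R) (hT : IsUnit T)
    (n : ℕ) (hn : 2 ≤ n) {x y : Fin n → R}
    (h : Matrix.vecMul x (torusMatrix R n T) = Matrix.vecMul y (torusMatrix R n T)) :
    x = y := by
  have hd := torusMatrix_det_isUnit T hT n hn
  have h1 : torusMatrix R n T * (torusMatrix R n T)⁻¹ = 1 := Matrix.mul_nonsing_inv _ hd
  calc x = Matrix.vecMul x (torusMatrix R n T * (torusMatrix R n T)⁻¹) := by
        rw [h1, Matrix.vecMul_one]
    _ = Matrix.vecMul y (torusMatrix R n T * (torusMatrix R n T)⁻¹) := by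
        rw [← Matrix.vecMul_vecMul, h, Matrix.vecMul_vecMul]
    _ = y := by rw [h1, Matrix.vecMul_one]

lemma torusMatrix_single_vecMul {R : Type*} [CommRing R] (T : R)
    (n : ℕ) (j : ℕ) (hj : j + 1 < n) :
    Matrix.vecMul (Pi.single (⟨j, by omega⟩ : Fin n) (1 : R)) (torusMatrix R n T)
      = T • (Pi.single (⟨j + 1, hj⟩ : Fin n) (1 : R) : Fin n → R) := by
  rw [Matrix.single_one_vecMul]
  funext c
  simp only [torusMatrix, Matrix.row, Matrix.of_apply, Pi.smul_apply, Pi.single_apply, smul_eq_mul]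
  have hjn : j ≠ n - 1 := by omega
  rw [if_neg hjn]
  by_cases hc : (c : ℕ) = j + 1
  · rw [if_pos hc, if_pos (Fin.ext hc), mul_one]
  · rw [if_neg hc, if_neg (fun hc' => hc (by rw [hc'])), mul_zero]

/-- Let `T` be a unit of a commutative ring `R`, `n ≥ 2`, and `A = A(T)` the
torus-braid monodromy matrix.  If `e_n · A^{kn} = e_n` (where `e_i` are the
standard basis row vectors, acting by right multiplication), then
`e_j · A^{kn} = e_j` for every `j`, i.e. `A^{kn}` is the identity matrix. -/
theorem torusMatrix_pow_eq_one_of_last_row {R : Type*} [CommRing R]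
    (T : R) (hT : IsUnit T) (n : ℕ) (hn : 2 ≤ n) (k : ℕ)
    (h : Matrix.vecMul (Pi.single (⟨n - 1, by omega⟩ : Fin n) (1 : R))
        (torusMatrix R n T ^ (k * n))
      = Pi.single (⟨n - 1, by omega⟩ : Fin n) (1 : R)) :
    (∀ j : Fin n, Matrix.vecMul (Pi.single j (1 : R)) (torusMatrix R n T ^ (k * n))
        = Pi.single j (1 : R)) ∧
      torusMatrix R n T ^ (k * n) = 1 := by
  set A := torusMatrix R n T with hA
  set M := A ^ (k * n) with hM
  have hcomm : A * M = M * A := ((Commute.refl A).pow_right (k * n)).eq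
  have claim : ∀ d, d < n → Matrix.vecMul (Pi.single (⟨n - 1 - d, by omega⟩ : Fin n) (1 : R)) M
      = Pi.single (⟨n - 1 - d, by omega⟩ : Fin n) (1 : R) := by
    intro d
    induction d with
    | zero => intro _; simpa using h
    | succ d ih =>
      intro hd
      have hih := ih (by omega)
      have hj : (n - 1 - (d + 1)) + 1 < n := by omega
      have hjj : (⟨n - 1 - (d+1) + 1, hj⟩ : Fin n) = ⟨n - 1 - d, by omega⟩ := Fin.ext (by simp; omega)
      have hstep := torusMatrix_single_vecMul T n (n - 1 - (d + 1)) hj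
      rw [hjj] at hstep
      apply torusMatrix_vecMul_cancel T hT n hn
      rw [Matrix.vecMul_vecMul, ← hcomm, ← Matrix.vecMul_vecMul, hstep,
        Matrix.smul_vecMul, hih, ← hstep]
  have hall : ∀ j : Fin n, Matrix.vecMul (Pi.single j (1 : R)) M = Pi.single j (1 : R) := by
    intro j
    have hj : (⟨n - 1 - (n - 1 - (j : ℕ)), by omega⟩ : Fin n) = j := Fin.ext (by simp; omega)
    have := claim (n - 1 - (j : ℕ)) (by omega)
    rwa [hj] at this
  refine ⟨hall, ?_⟩
  ext i c
  have h2 : M i = Pi.single i (1 : R) := (Matrix.single_one_vecMul i M).symm.trans (hall i)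
  rw [show M i c = (M i) c from rfl, h2]
  simp [Matrix.one_apply, Pi.single_apply, eq_comm]
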